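/- Consider the random graph mixture model with κ-state edge variables and Q ≥ 2 latent groups: parameters are π ∈ (0,1)^Q with Σ_q π_q = 1 and symmetric probability vectors p_{ql} = (p_{ql}(1),…,p_{ql}(κ)) (entries nonnegative summing to 1); the distribution of K_9 is the probability mass function on x = (x_{ij})_{1≤i<j≤9} ∈ {1,…,κ}^{36} given by P_{π,p}(x) = Σ_{z : {1,…,9}→{1,…,Q}} (Π_{i=1}^9 π_{z(i)}) · Π_{1≤i<j≤9} p_{z(i)z(j)}(x_{ij}). Suppose κ ≥ Q(Q+1)/2 and that each of two parameter sets (π, p) and (π′, p′) has the property that its Q(Q+1)/2 vectors {p_{ql}}_{1≤q≤l≤Q} ⊆ ℝ^κ are linearly independent. If P_{π,p} = P_{π′,p′}, then there is a permutation σ of {1,…,Q} such that π′_q = π_{σ(q)} and p′_{ql} = p_{σ(q)σ(l)} for all q, l. -/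

import Mathlib

open Finset

lemma exists_dual {ι : Type*} [DecidableEq ι] {n : ℕ} (v : ι → (Fin n → ℝ))
    (hv : LinearIndependent ℝ v) :
    ∃ c : ι → Fin n → ℝ, ∀ i j, (∑ a, c i a * v j a) = if j = i then 1 else 0 := by
  classical
  have hinj : Function.Injective v := hv.injective
  have hs : LinearIndepOn ℝ id (Set.range v) := (linearIndepOn_id_range_iff hinj).mpr hv
  let b : Module.Basis _ ℝ (Fin n → ℝ) := Module.Basis.extend hs
  have hmem : ∀ i, v i ∈ hs.extend (Set.subset_univ _) := fun i => hs.subset_extend _ ⟨i, rfl⟩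
  refine ⟨fun i a => b.coord ⟨v i, hmem i⟩ (fun j => if a = j then 1 else 0), fun i j => ?_⟩
  have h1 : (b.coord ⟨v i, hmem i⟩) (v j) = if j = i then 1 else 0 := by
    have h2 : v j = b ⟨v j, hmem j⟩ := (Module.Basis.extend_apply_self hs ⟨v j, hmem j⟩).symm
    rw [h2, Module.Basis.coord_apply, Module.Basis.repr_self, Finsupp.single_apply]
    simp [Subtype.ext_iff, hinj.eq_iff, b]
  rw [← h1, LinearMap.pi_apply_eq_sum_univ (b.coord ⟨v i, hmem i⟩) (v j)]
  simp [mul_comm]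

def glue {m n : ℕ} {α : Type*} (u : Fin m → α) (v : Fin n → α) : Fin (m + n) → α :=
  fun i => Sum.elim u v (finSumFinEquiv.symm i)

lemma sum_glue {m n : ℕ} {α M : Type*} [Fintype α] [AddCommMonoid M]
    (F : (Fin (m + n) → α) → M) :
    ∑ z : Fin (m + n) → α, F z = ∑ u : Fin m → α, ∑ v : Fin n → α, F (glue u v) := by
  classical
  let e : ((Fin m → α) × (Fin n → α)) ≃ (Fin (m + n) → α) :=
    (Equiv.sumArrowEquivProdArrow _ _ _).symm.trans
      (Equiv.arrowCongr finSumFinEquiv (Equiv.refl α))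
  rw [← Equiv.sum_comp e F, Fintype.sum_prod_type]
  rfl

lemma prod_glue {m n : ℕ} {α : Type*} [Fintype α] (f : α → ℝ)
    (u : Fin m → α) (v : Fin n → α) :
    ∏ i, f (glue u v i) = (∏ i, f (u i)) * (∏ i, f (v i)) := by
  classical
  rw [← Equiv.prod_comp finSumFinEquiv (fun i => f (glue u v i))]
  have h : ∀ s : Fin m ⊕ Fin n, f (glue u v (finSumFinEquiv s)) = f (Sum.elim u v s) := by
    intro s; simp [glue]
  rw [Finset.prod_congr rfl (fun s _ => h s), Fintype.prod_sum_type]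
  simp

lemma sum_prod_swap {ι₁ ι₂ K : Type*} [Fintype ι₁] [Fintype ι₂] [Fintype K] [DecidableEq K]
    [DecidableEq ι₂] [DecidableEq ι₁] (H : ι₁ → ι₂ → K → ℝ) :
    ∑ x : ι₁ → ι₂ → K, ∏ i, ∏ j, H i j (x i j) = ∏ i, ∏ j, ∑ k, H i j k := by
  classical
  calc ∑ x : ι₁ → ι₂ → K, ∏ i, ∏ j, H i j (x i j)
      = ∑ x ∈ Fintype.piFinset (fun _ : ι₁ => (Finset.univ : Finset (ι₂ → K))),
          ∏ i, ∏ j, H i j (x i j) := by rw [Fintype.piFinset_univ]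
    _ = ∏ i, ∑ y : ι₂ → K, ∏ j, H i j (y j) := by
          rw [Finset.prod_univ_sum]
    _ = ∏ i, ∏ j, ∑ k, H i j k := by
          refine Finset.prod_congr rfl fun i _ => ?_
          rw [Finset.prod_univ_sum, Fintype.piFinset_univ]

def sortPair {Q : ℕ} (q l : Fin Q) : {e : Fin Q × Fin Q // e.1 ≤ e.2} :=
  if h : q ≤ l then ⟨(q, l), h⟩ else ⟨(l, q), le_of_not_ge h⟩

lemma sortPair_spec {Q : ℕ} (q l : Fin Q) :
    (sortPair q l).1 = (q, l) ∨ (sortPair q l).1 = (l, q) := by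
  unfold sortPair; split <;> simp

lemma sortPair_cases {Q : ℕ} {q l q' l' : Fin Q} (h : sortPair q l = sortPair q' l') :
    (q = q' ∧ l = l') ∨ (q = l' ∧ l = q') := by
  have h1 := sortPair_spec q l
  have h2 := sortPair_spec q' l'
  have h3 : (sortPair q l).1 = (sortPair q' l').1 := by rw [h]
  rcases h1 with h1 | h1 <;> rcases h2 with h2 | h2 <;>
    rw [h1, h2] at h3 <;> rw [Prod.ext_iff] at h3 <;> simp at h3 <;> tauto

lemma sortPair_diag {Q : ℕ} {q m x : Fin Q} :
    sortPair q m = sortPair x x ↔ (q = x ∧ m = x) := by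
  constructor
  · intro h; rcases sortPair_cases h with ⟨h1, h2⟩ | ⟨h1, h2⟩ <;> exact ⟨h1, h2⟩
  · rintro ⟨rfl, rfl⟩; rfl

lemma sortPair_cancel {Q : ℕ} {a b c : Fin Q} (h : sortPair a c = sortPair b c) : a = b := by
  rcases sortPair_cases h with ⟨h1, _⟩ | ⟨h1, h2⟩
  · exact h1
  · rw [h1, h2]

lemma sortPair_fst_mem {Q : ℕ} (q l : Fin Q) :
    (sortPair q l).1.1 = q ∨ (sortPair q l).1.1 = l := by
  rcases sortPair_spec q l with h | h <;> rw [h] <;> simp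

lemma sortPair_snd_mem {Q : ℕ} (q l : Fin Q) :
    (sortPair q l).1.2 = q ∨ (sortPair q l).1.2 = l := by
  rcases sortPair_spec q l with h | h <;> rw [h] <;> simp

def wfun {Q κ : ℕ} (π : Fin Q → ℝ) (p : Fin Q → Fin Q → Fin κ → ℝ)
    (q l : Fin Q) (a b : Fin κ) : ℝ :=
  ∑ m, π m * (p q m a * p l m b)

lemma contract_w {Q κ : ℕ} (π₀ : Fin Q → ℝ) (p₀ : Fin Q → Fin Q → Fin κ → ℝ)
    (q l : Fin Q) (u v : Fin κ → ℝ) :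
    ∑ a, ∑ b, (u a * v b) * wfun π₀ p₀ q l a b
      = ∑ m, π₀ m * ((∑ a, u a * p₀ q m a) * (∑ b, v b * p₀ l m b)) := by
  unfold wfun
  have lhs1 : ∀ a : Fin κ, ∑ b, (u a * v b) * ∑ m, π₀ m * (p₀ q m a * p₀ l m b)
      = ∑ m, ∑ b, (u a * v b) * (π₀ m * (p₀ q m a * p₀ l m b)) := by
    intro a
    rw [Finset.sum_comm]
    exact Finset.sum_congr rfl fun b _ => by rw [Finset.mul_sum]
  calc ∑ a, ∑ b, (u a * v b) * ∑ m, π₀ m * (p₀ q m a * p₀ l m b)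
      = ∑ a, ∑ m, ∑ b, (u a * v b) * (π₀ m * (p₀ q m a * p₀ l m b)) :=
        Finset.sum_congr rfl fun a _ => lhs1 a
    _ = ∑ m, ∑ a, ∑ b, (u a * v b) * (π₀ m * (p₀ q m a * p₀ l m b)) := Finset.sum_comm
    _ = ∑ m, π₀ m * ((∑ a, u a * p₀ q m a) * (∑ b, v b * p₀ l m b)) := by
        refine Finset.sum_congr rfl fun m _ => ?_
        rw [Finset.sum_mul_sum, Finset.mul_sum]
        refine Finset.sum_congr rfl fun a _ => ?_
        rw [Finset.mul_sum]
        exact Finset.sum_congr rfl fun b _ => by ring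

lemma wfun_total {Q κ : ℕ} (π₀ : Fin Q → ℝ) (p₀ : Fin Q → Fin Q → Fin κ → ℝ)
    (hπ₀ : ∑ q, π₀ q = 1) (hp₀ : ∀ q l, ∑ k, p₀ q l k = 1) (q l : Fin Q) :
    ∑ a : Fin κ, ∑ b : Fin κ, wfun π₀ p₀ q l a b = 1 := by
  have h := contract_w π₀ p₀ q l (fun _ => 1) (fun _ => 1)
  simp only [one_mul] at h
  rw [h]
  simp [hp₀, hπ₀]

noncomputable def psiA {Q κ : ℕ} (π : Fin Q → ℝ)
    (c : {e : Fin Q × Fin Q // e.1 ≤ e.2} → Fin κ → ℝ)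
    (d : Fin Q × Fin Q) (a : Fin κ) : ℝ :=
  (π d.1)⁻¹ * c (sortPair d.1 d.1) a

def psiB {Q κ : ℕ} (c : {e : Fin Q × Fin Q // e.1 ≤ e.2} → Fin κ → ℝ)
    (d : Fin Q × Fin Q) (b : Fin κ) : ℝ :=
  c (sortPair d.2 d.1) b

lemma psi_eval {Q κ : ℕ} (π : Fin Q → ℝ) (p : Fin Q → Fin Q → Fin κ → ℝ)
    (c : {e : Fin Q × Fin Q // e.1 ≤ e.2} → Fin κ → ℝ)
    (hπpos : ∀ q, 0 < π q)
    (hdual : ∀ e (q l : Fin Q), (∑ a, c e a * p q l a) = if sortPair q l = e then 1 else 0)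
    (d₀ : Fin Q × Fin Q) (q l : Fin Q) :
    ∑ a, ∑ b, (psiA π c d₀ a * psiB c d₀ b) * wfun π p q l a b
      = if (q, l) = d₀ then 1 else 0 := by
  classical
  rw [contract_w]
  have h1 : ∀ m : Fin Q, (∑ a, psiA π c d₀ a * p q m a)
      = (π d₀.1)⁻¹ * (if q = d₀.1 ∧ m = d₀.1 then 1 else 0) := by
    intro m
    have e1 : ∑ a, psiA π c d₀ a * p q m a
        = (π d₀.1)⁻¹ * ∑ a, c (sortPair d₀.1 d₀.1) a * p q m a := by
      rw [Finset.mul_sum]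
      exact Finset.sum_congr rfl fun a _ => by unfold psiA; ring
    rw [e1, hdual]
    congr 1
    simp only [sortPair_diag]
  have h2 : ∀ m : Fin Q, (∑ b, psiB c d₀ b * p l m b)
      = (if sortPair l m = sortPair d₀.2 d₀.1 then 1 else 0) := fun m => hdual _ _ _
  rw [Finset.sum_congr rfl fun m _ => by rw [h1 m, h2 m]]
  by_cases hq : q = d₀.1
  · by_cases hl : l = d₀.2
    · rw [if_pos (show (q, l) = d₀ by rw [hq, hl])]
      rw [Finset.sum_eq_single d₀.1]
      · rw [if_pos ⟨hq, rfl⟩, if_pos (by rw [hl])]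
        have hne : π d₀.1 ≠ 0 := (hπpos d₀.1).ne'
        field_simp
      · intro m _ hm
        rw [if_neg (fun hcon => hm hcon.2)]
        ring
      · intro h; exact absurd (Finset.mem_univ _) h
    · rw [if_neg (fun hcon => hl (congrArg Prod.snd hcon))]
      refine Finset.sum_eq_zero fun m _ => ?_
      by_cases hm : m = d₀.1
      · subst hm
        rw [if_neg (fun hcon => hl (sortPair_cancel hcon))]
        ring
      · rw [if_neg (fun hcon => hm hcon.2)]
        ring
  · rw [if_neg (fun hcon => hq (congrArg Prod.fst hcon))]
    refine Finset.sum_eq_zero fun m _ => ?_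
    rw [if_neg (fun hcon => hq hcon.1)]
    ring
def EV {Q κ : ℕ} (p₀ : Fin Q → Fin Q → Fin κ → ℝ) (g : Fin κ → ℝ) (u v : Fin 3 → Fin κ → ℝ)
    (z0 z1 z2 z3 z4 : Fin Q) : ℝ :=
  (∑ k, g k * p₀ z0 z1 k) *
    ((∑ k, u 0 k * p₀ z0 z2 k) * ((∑ k, v 0 k * p₀ z1 z2 k) *
     ((∑ k, u 1 k * p₀ z0 z3 k) * ((∑ k, v 1 k * p₀ z1 z3 k) *
      ((∑ k, u 2 k * p₀ z0 z4 k) * (∑ k, v 2 k * p₀ z1 z4 k))))))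

lemma marginalize {Q κ : ℕ} (π₀ : Fin Q → ℝ) (p₀ : Fin Q → Fin Q → Fin κ → ℝ)
    (hπ₀ : ∑ q, π₀ q = 1) (hp₀ : ∀ q l, ∑ k, p₀ q l k = 1)
    (g : Fin κ → ℝ) (u v : Fin 3 → Fin κ → ℝ)
    (f : Fin 9 → Fin 9 → Fin κ → ℝ)
    (hf : f = fun i j =>
      if (i,j) = ((0 : Fin 9), (1 : Fin 9)) then g
      else if (i,j) = (0,2) then u 0 else if (i,j) = (1,2) then v 0
      else if (i,j) = (0,3) then u 1 else if (i,j) = (1,3) then v 1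
      else if (i,j) = (0,4) then u 2 else if (i,j) = (1,4) then v 2
      else fun _ => 1) :
    (∑ z : Fin 9 → Fin Q, (∏ i, π₀ (z i)) *
        ∏ i, ∏ j, (if i < j then ∑ k, f i j k * p₀ (z i) (z j) k else 1))
    = ∑ d : Fin Q × Fin Q, (π₀ d.1 * π₀ d.2) * ((∑ k, g k * p₀ d.1 d.2 k) *
        ∏ j : Fin 3, ∑ a, ∑ b, (u j a * v j b) * wfun π₀ p₀ d.1 d.2 a b) := by
  classical
  have hprod : ∀ z : Fin 9 → Fin Q,
      (∏ i, ∏ j, (if i < j then ∑ k, f i j k * p₀ (z i) (z j) k else 1))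
      = EV p₀ g u v (z 0) (z 1) (z 2) (z 3) (z 4) := by
    intro z
    have h0 : (∏ i, ∏ j, (if i < j then ∑ k, f i j k * p₀ (z i) (z j) k else 1))
        = ∏ e : Fin 9 × Fin 9, (if e.1 < e.2 then ∑ k, f e.1 e.2 k * p₀ (z e.1) (z e.2) k else 1) :=
      (Fintype.prod_prod_type' _).symm
    rw [h0]
    rw [← Finset.prod_mul_prod_compl
      ({((0:Fin 9),(1:Fin 9)),(0,2),(1,2),(0,3),(1,3),(0,4),(1,4)} : Finset (Fin 9 × Fin 9))]
    have hc : (∏ e ∈ ({((0:Fin 9),(1:Fin 9)),(0,2),(1,2),(0,3),(1,3),(0,4),(1,4)} :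
        Finset (Fin 9 × Fin 9))ᶜ,
        (if e.1 < e.2 then ∑ k, f e.1 e.2 k * p₀ (z e.1) (z e.2) k else 1)) = 1 := by
      refine Finset.prod_eq_one fun e he => ?_
      rw [Finset.mem_compl] at he
      simp only [Finset.mem_insert, Finset.mem_singleton] at he
      push_neg at he
      obtain ⟨h1, h2, h3, h4, h5, h6, h7⟩ := he
      have hfe : f e.1 e.2 = fun _ => 1 := by
        rw [hf]
        simp only [Prod.mk.eta]
        rw [if_neg h1, if_neg h2, if_neg h3, if_neg h4, if_neg h5, if_neg h6, if_neg h7]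
      rw [hfe]
      split
      · simp [hp₀]
      · rfl
    rw [hc, mul_one]
    rw [show ({((0:Fin 9),(1:Fin 9)),(0,2),(1,2),(0,3),(1,3),(0,4),(1,4)} :
        Finset (Fin 9 × Fin 9))
        = insert ((0:Fin 9),(1:Fin 9)) (insert (0,2) (insert (1,2) (insert (0,3)
          (insert (1,3) (insert (0,4) {(1,4)}))))) from rfl]
    rw [Finset.prod_insert (by decide), Finset.prod_insert (by decide),
      Finset.prod_insert (by decide), Finset.prod_insert (by decide),
      Finset.prod_insert (by decide), Finset.prod_insert (by decide),
      Finset.prod_singleton]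
    rw [hf]
    simp [EV]
  have hsum4 : ∑ v4 : Fin 4 → Fin Q, ∏ i, π₀ (v4 i) = 1 := by
    have h := Finset.prod_univ_sum (t := fun _ : Fin 4 => (univ : Finset (Fin Q)))
      (f := fun _ q => π₀ q)
    rw [Fintype.piFinset_univ] at h
    rw [← h]
    simp [hπ₀]
  calc (∑ z : Fin 9 → Fin Q, (∏ i, π₀ (z i)) *
        ∏ i, ∏ j, (if i < j then ∑ k, f i j k * p₀ (z i) (z j) k else 1))
      = ∑ z : Fin 9 → Fin Q, (∏ i, π₀ (z i)) * EV p₀ g u v (z 0) (z 1) (z 2) (z 3) (z 4) :=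
        Finset.sum_congr rfl fun z _ => by rw [hprod z]
    _ = ∑ u5 : Fin 5 → Fin Q, ∑ v4 : Fin 4 → Fin Q,
          (∏ i, π₀ (glue u5 v4 i)) * EV p₀ g u v (glue u5 v4 0) (glue u5 v4 1)
            (glue u5 v4 2) (glue u5 v4 3) (glue u5 v4 4) :=
        sum_glue (m := 5) (n := 4) (fun z => (∏ i, π₀ (z i)) * EV p₀ g u v (z 0) (z 1) (z 2) (z 3) (z 4))
    _ = ∑ u5 : Fin 5 → Fin Q, ∑ v4 : Fin 4 → Fin Q,
          ((∏ i, π₀ (u5 i)) * (∏ i, π₀ (v4 i))) *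
            EV p₀ g u v (u5 0) (u5 1) (u5 2) (u5 3) (u5 4) := by
        refine Finset.sum_congr rfl fun u5 _ => Finset.sum_congr rfl fun v4 _ => ?_
        rw [prod_glue]
        rfl
    _ = ∑ u5 : Fin 5 → Fin Q,
          (∏ i, π₀ (u5 i)) * EV p₀ g u v (u5 0) (u5 1) (u5 2) (u5 3) (u5 4) := by
        refine Finset.sum_congr rfl fun u5 _ => ?_
        have h1 : ∀ v4 : Fin 4 → Fin Q,
            ((∏ i, π₀ (u5 i)) * (∏ i, π₀ (v4 i))) *
              EV p₀ g u v (u5 0) (u5 1) (u5 2) (u5 3) (u5 4)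
            = (∏ i, π₀ (v4 i)) *
              ((∏ i, π₀ (u5 i)) * EV p₀ g u v (u5 0) (u5 1) (u5 2) (u5 3) (u5 4)) :=
          fun v4 => by ring
        rw [Finset.sum_congr rfl fun v4 _ => h1 v4, ← Finset.sum_mul, hsum4, one_mul]
    _ = ∑ s2 : Fin 2 → Fin Q, ∑ t3 : Fin 3 → Fin Q,
          (∏ i, π₀ (glue s2 t3 i)) * EV p₀ g u v (glue s2 t3 0) (glue s2 t3 1)
            (glue s2 t3 2) (glue s2 t3 3) (glue s2 t3 4) :=
        sum_glue (m := 2) (n := 3) (fun z => (∏ i, π₀ (z i)) * EV p₀ g u v (z 0) (z 1) (z 2) (z 3) (z 4))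
    _ = ∑ s2 : Fin 2 → Fin Q, ∑ t3 : Fin 3 → Fin Q,
          ((∏ i, π₀ (s2 i)) * (∏ i, π₀ (t3 i))) *
            EV p₀ g u v (s2 0) (s2 1) (t3 0) (t3 1) (t3 2) := by
        refine Finset.sum_congr rfl fun s2 _ => Finset.sum_congr rfl fun t3 _ => ?_
        rw [prod_glue]
        rfl
    _ = ∑ s2 : Fin 2 → Fin Q, (π₀ (s2 0) * π₀ (s2 1)) * ((∑ k, g k * p₀ (s2 0) (s2 1) k) *
          ∏ j : Fin 3, ∑ a, ∑ b, (u j a * v j b) * wfun π₀ p₀ (s2 0) (s2 1) a b) := by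
        refine Finset.sum_congr rfl fun s2 _ => ?_
        have key3 : ∑ t3 : Fin 3 → Fin Q,
            ((∏ i, π₀ (s2 i)) * (∏ i, π₀ (t3 i))) *
              EV p₀ g u v (s2 0) (s2 1) (t3 0) (t3 1) (t3 2)
            = (π₀ (s2 0) * π₀ (s2 1)) * ((∑ k, g k * p₀ (s2 0) (s2 1) k) *
              ∏ j : Fin 3, ∑ m, π₀ m *
                ((∑ a, u j a * p₀ (s2 0) m a) * (∑ b, v j b * p₀ (s2 1) m b))) := by
          calc ∑ t3 : Fin 3 → Fin Q,
              ((∏ i, π₀ (s2 i)) * (∏ i, π₀ (t3 i))) *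
                EV p₀ g u v (s2 0) (s2 1) (t3 0) (t3 1) (t3 2)
              = ∑ t3 : Fin 3 → Fin Q,
                ((π₀ (s2 0) * π₀ (s2 1)) * (∑ k, g k * p₀ (s2 0) (s2 1) k)) *
                  ∏ j : Fin 3, (π₀ (t3 j) *
                    ((∑ a, u j a * p₀ (s2 0) (t3 j) a) * (∑ b, v j b * p₀ (s2 1) (t3 j) b))) := by
                refine Finset.sum_congr rfl fun t3 _ => ?_
                rw [Fin.prod_univ_two (f := fun i => π₀ (s2 i)),
                  Fin.prod_univ_three (f := fun i => π₀ (t3 i)),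
                  Fin.prod_univ_three (f := fun j : Fin 3 => (π₀ (t3 j) *
                    ((∑ a, u j a * p₀ (s2 0) (t3 j) a) * (∑ b, v j b * p₀ (s2 1) (t3 j) b))))]
                unfold EV
                ring
            _ = ((π₀ (s2 0) * π₀ (s2 1)) * (∑ k, g k * p₀ (s2 0) (s2 1) k)) *
                ∑ t3 : Fin 3 → Fin Q, ∏ j : Fin 3, (π₀ (t3 j) *
                  ((∑ a, u j a * p₀ (s2 0) (t3 j) a) * (∑ b, v j b * p₀ (s2 1) (t3 j) b))) := by
                rw [← Finset.mul_sum]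
            _ = ((π₀ (s2 0) * π₀ (s2 1)) * (∑ k, g k * p₀ (s2 0) (s2 1) k)) *
                ∏ j : Fin 3, ∑ m, (π₀ m *
                  ((∑ a, u j a * p₀ (s2 0) m a) * (∑ b, v j b * p₀ (s2 1) m b))) := by
                congr 1
                have h2 := Finset.prod_univ_sum (t := fun _ : Fin 3 => (univ : Finset (Fin Q)))
                  (f := fun j m => (π₀ m *
                    ((∑ a, u j a * p₀ (s2 0) m a) * (∑ b, v j b * p₀ (s2 1) m b))))
                rw [Fintype.piFinset_univ] at h2
                rw [h2]
            _ = (π₀ (s2 0) * π₀ (s2 1)) * ((∑ k, g k * p₀ (s2 0) (s2 1) k) *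
                ∏ j : Fin 3, ∑ m, (π₀ m *
                  ((∑ a, u j a * p₀ (s2 0) m a) * (∑ b, v j b * p₀ (s2 1) m b)))) := by
                rw [mul_assoc]
        rw [key3]
        congr 1
        congr 1
        exact Finset.prod_congr rfl fun j _ =>
          (contract_w π₀ p₀ (s2 0) (s2 1) (u j) (v j)).symm
    _ = ∑ d : Fin Q × Fin Q, (π₀ d.1 * π₀ d.2) * ((∑ k, g k * p₀ d.1 d.2 k) *
          ∏ j : Fin 3, ∑ a, ∑ b, (u j a * v j b) * wfun π₀ p₀ d.1 d.2 a b) :=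
        (Equiv.sum_comp (finTwoArrowEquiv (Fin Q)).symm
          (fun s2 => (π₀ (s2 0) * π₀ (s2 1)) * ((∑ k, g k * p₀ (s2 0) (s2 1) k) *
            ∏ j : Fin 3, ∑ a, ∑ b, (u j a * v j b) * wfun π₀ p₀ (s2 0) (s2 1) a b))).symm

lemma modelM {Q κ : ℕ} (hκpos : 0 < κ)
    (π π' : Fin Q → ℝ) (p p' : Fin Q → Fin Q → Fin κ → ℝ)
    (hpsum : ∀ q l, ∑ k, p q l k = 1) (hp'sum : ∀ q l, ∑ k, p' q l k = 1)
    (heq : ∀ x : Fin 9 → Fin 9 → Fin κ,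
      (∑ z : Fin 9 → Fin Q, (∏ i, π (z i)) *
        ∏ i, ∏ j, (if i < j then p (z i) (z j) (x i j) else 1))
      = ∑ z : Fin 9 → Fin Q, (∏ i, π' (z i)) *
        ∏ i, ∏ j, (if i < j then p' (z i) (z j) (x i j) else 1))
    (f : Fin 9 → Fin 9 → Fin κ → ℝ) :
      (∑ z : Fin 9 → Fin Q, (∏ i, π (z i)) *
        ∏ i, ∏ j, (if i < j then ∑ k, f i j k * p (z i) (z j) k else 1))
      = ∑ z : Fin 9 → Fin Q, (∏ i, π' (z i)) *
        ∏ i, ∏ j, (if i < j then ∑ k, f i j k * p' (z i) (z j) k else 1) := by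
  classical
  have hκR : (κ : ℝ) ≠ 0 := Nat.cast_ne_zero.mpr hκpos.ne'
  have key : ∀ (π₀ : Fin Q → ℝ) (p₀ : Fin Q → Fin Q → Fin κ → ℝ),
      (∀ q l, ∑ k, p₀ q l k = 1) →
      (∑ x : Fin 9 → Fin 9 → Fin κ,
        (∏ i, ∏ j, (if i < j then f i j (x i j) else (κ:ℝ)⁻¹)) *
        (∑ z : Fin 9 → Fin Q, (∏ i, π₀ (z i)) *
          ∏ i, ∏ j, (if i < j then p₀ (z i) (z j) (x i j) else 1)))
      = ∑ z : Fin 9 → Fin Q, (∏ i, π₀ (z i)) *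
          ∏ i, ∏ j, (if i < j then ∑ k, f i j k * p₀ (z i) (z j) k else 1) := by
    intro π₀ p₀ hp₀
    calc (∑ x : Fin 9 → Fin 9 → Fin κ,
        (∏ i, ∏ j, (if i < j then f i j (x i j) else (κ:ℝ)⁻¹)) *
        (∑ z : Fin 9 → Fin Q, (∏ i, π₀ (z i)) *
          ∏ i, ∏ j, (if i < j then p₀ (z i) (z j) (x i j) else 1)))
        = ∑ x : Fin 9 → Fin 9 → Fin κ, ∑ z : Fin 9 → Fin Q, (∏ i, π₀ (z i)) *
            ((∏ i, ∏ j, (if i < j then f i j (x i j) else (κ:ℝ)⁻¹)) *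
             (∏ i, ∏ j, (if i < j then p₀ (z i) (z j) (x i j) else 1))) := by
          refine Finset.sum_congr rfl fun x _ => ?_
          rw [Finset.mul_sum]
          exact Finset.sum_congr rfl fun z _ => by ring
      _ = ∑ z : Fin 9 → Fin Q, ∑ x : Fin 9 → Fin 9 → Fin κ, (∏ i, π₀ (z i)) *
            ((∏ i, ∏ j, (if i < j then f i j (x i j) else (κ:ℝ)⁻¹)) *
             (∏ i, ∏ j, (if i < j then p₀ (z i) (z j) (x i j) else 1))) := Finset.sum_comm
      _ = ∑ z : Fin 9 → Fin Q, (∏ i, π₀ (z i)) *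
            ∑ x : Fin 9 → Fin 9 → Fin κ,
              ∏ i, ∏ j, (if i < j then f i j (x i j) * p₀ (z i) (z j) (x i j) else (κ:ℝ)⁻¹) := by
          refine Finset.sum_congr rfl fun z _ => ?_
          rw [Finset.mul_sum]
          refine Finset.sum_congr rfl fun x _ => ?_
          congr 1
          rw [← Finset.prod_mul_distrib]
          refine Finset.prod_congr rfl fun i _ => ?_
          rw [← Finset.prod_mul_distrib]
          refine Finset.prod_congr rfl fun j _ => ?_
          by_cases h : i < j <;> simp [h]
      _ = ∑ z : Fin 9 → Fin Q, (∏ i, π₀ (z i)) *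
            ∏ i, ∏ j, ∑ k, (if i < j then f i j k * p₀ (z i) (z j) k else (κ:ℝ)⁻¹) := by
          refine Finset.sum_congr rfl fun z _ => ?_
          congr 1
          exact sum_prod_swap (fun i j k => if i < j then f i j k * p₀ (z i) (z j) k else (κ:ℝ)⁻¹)
      _ = ∑ z : Fin 9 → Fin Q, (∏ i, π₀ (z i)) *
          ∏ i, ∏ j, (if i < j then ∑ k, f i j k * p₀ (z i) (z j) k else 1) := by
          refine Finset.sum_congr rfl fun z _ => ?_
          congr 1
          refine Finset.prod_congr rfl fun i _ => Finset.prod_congr rfl fun j _ => ?_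
          by_cases hij : i < j
          · simp [hij]
          · simp only [if_neg hij]
            rw [Finset.sum_const, Finset.card_univ, Fintype.card_fin, nsmul_eq_mul,
              mul_inv_cancel₀ hκR]
  calc (∑ z : Fin 9 → Fin Q, (∏ i, π (z i)) *
        ∏ i, ∏ j, (if i < j then ∑ k, f i j k * p (z i) (z j) k else 1))
      = ∑ x : Fin 9 → Fin 9 → Fin κ,
        (∏ i, ∏ j, (if i < j then f i j (x i j) else (κ:ℝ)⁻¹)) *
        (∑ z : Fin 9 → Fin Q, (∏ i, π (z i)) *
          ∏ i, ∏ j, (if i < j then p (z i) (z j) (x i j) else 1)) := (key π p hpsum).symm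
    _ = ∑ x : Fin 9 → Fin 9 → Fin κ,
        (∏ i, ∏ j, (if i < j then f i j (x i j) else (κ:ℝ)⁻¹)) *
        (∑ z : Fin 9 → Fin Q, (∏ i, π' (z i)) *
          ∏ i, ∏ j, (if i < j then p' (z i) (z j) (x i j) else 1)) :=
        Finset.sum_congr rfl fun x _ => by rw [heq x]
    _ = _ := key π' p' hp'sum

lemma modelT {Q κ : ℕ} (hκpos : 0 < κ)
    (π π' : Fin Q → ℝ) (p p' : Fin Q → Fin Q → Fin κ → ℝ)
    (hπsum : ∑ q, π q = 1) (hπ'sum : ∑ q, π' q = 1)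
    (hpsum : ∀ q l, ∑ k, p q l k = 1) (hp'sum : ∀ q l, ∑ k, p' q l k = 1)
    (heq : ∀ x : Fin 9 → Fin 9 → Fin κ,
      (∑ z : Fin 9 → Fin Q, (∏ i, π (z i)) *
        ∏ i, ∏ j, (if i < j then p (z i) (z j) (x i j) else 1))
      = ∑ z : Fin 9 → Fin Q, (∏ i, π' (z i)) *
        ∏ i, ∏ j, (if i < j then p' (z i) (z j) (x i j) else 1))
    (g : Fin κ → ℝ) (u v : Fin 3 → Fin κ → ℝ) :
    (∑ d : Fin Q × Fin Q, (π d.1 * π d.2) * ((∑ k, g k * p d.1 d.2 k) *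
        ∏ j : Fin 3, ∑ a, ∑ b, (u j a * v j b) * wfun π p d.1 d.2 a b))
    = ∑ d : Fin Q × Fin Q, (π' d.1 * π' d.2) * ((∑ k, g k * p' d.1 d.2 k) *
        ∏ j : Fin 3, ∑ a, ∑ b, (u j a * v j b) * wfun π' p' d.1 d.2 a b) := by
  rw [← marginalize π p hπsum hpsum g u v _ rfl, ← marginalize π' p' hπ'sum hp'sum g u v _ rfl]
  exact modelM hκpos π π' p p' hpsum hp'sum heq _
lemma sum_delta_mul {κ : ℕ} (v : Fin κ → ℝ) (k : Fin κ) :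
    ∑ k' : Fin κ, (if k' = k then (1:ℝ) else 0) * v k' = v k := by
  simp [ite_mul]

lemma sum_delta2_mul {Q κ : ℕ} (π₀ : Fin Q → ℝ) (p₀ : Fin Q → Fin Q → Fin κ → ℝ)
    (q l : Fin Q) (a b : Fin κ) :
    ∑ a' : Fin κ, ∑ b' : Fin κ,
      ((if a' = a then (1:ℝ) else 0) * (if b' = b then (1:ℝ) else 0)) * wfun π₀ p₀ q l a' b'
      = wfun π₀ p₀ q l a b := by
  simp [ite_mul]

lemma pull_const {κ : ℕ} (C : ℝ) (w : Fin κ → Fin κ → ℝ) :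
    ∑ a, ∑ b, C * w a b = C * ∑ a, ∑ b, w a b := by
  simp [Finset.mul_sum]

noncomputable def BM {Q κ : ℕ} (πψ : Fin Q → ℝ)
    (cψ : {e : Fin Q × Fin Q // e.1 ≤ e.2} → Fin κ → ℝ)
    (π₀ : Fin Q → ℝ) (p₀ : Fin Q → Fin Q → Fin κ → ℝ) (d₁ d : Fin Q × Fin Q) : ℝ :=
  ∑ a, ∑ b, (psiA πψ cψ d₁ a * psiB cψ d₁ b) * wfun π₀ p₀ d.1 d.2 a b

/-- Identifiability, up to label swapping, of the parameters of the random graph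
mixture model with `κ`-state edge variables and `Q ≥ 2` latent groups from the
distribution of `K₉`, provided `κ ≥ Q(Q+1)/2` and the connectivity vectors
`{p_{ql}}_{q ≤ l}` are linearly independent. -/
theorem finite_state_identifiable_from_K9
    (Q κ : ℕ) (hQ : 2 ≤ Q) (hκ : Q * (Q + 1) / 2 ≤ κ)
    (π π' : Fin Q → ℝ) (p p' : Fin Q → Fin Q → Fin κ → ℝ)
    (hπ : ∀ q, π q ∈ Set.Ioo (0 : ℝ) 1) (hπ' : ∀ q, π' q ∈ Set.Ioo (0 : ℝ) 1)
    (hπsum : ∑ q, π q = 1) (hπ'sum : ∑ q, π' q = 1)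
    (hpsym : ∀ q l, p q l = p l q) (hp'sym : ∀ q l, p' q l = p' l q)
    (hpnn : ∀ q l k, 0 ≤ p q l k) (hp'nn : ∀ q l k, 0 ≤ p' q l k)
    (hpsum : ∀ q l, ∑ k, p q l k = 1) (hp'sum : ∀ q l, ∑ k, p' q l k = 1)
    (hind : LinearIndependent ℝ
      (fun e : {e : Fin Q × Fin Q // e.1 ≤ e.2} => p e.1.1 e.1.2))
    (hind' : LinearIndependent ℝ
      (fun e : {e : Fin Q × Fin Q // e.1 ≤ e.2} => p' e.1.1 e.1.2))
    (heq : ∀ x : Fin 9 → Fin 9 → Fin κ,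
      (∑ z : Fin 9 → Fin Q, (∏ i, π (z i)) *
        ∏ i, ∏ j, (if i < j then p (z i) (z j) (x i j) else 1))
      = ∑ z : Fin 9 → Fin Q, (∏ i, π' (z i)) *
        ∏ i, ∏ j, (if i < j then p' (z i) (z j) (x i j) else 1)) :
    ∃ σ : Equiv.Perm (Fin Q),
      (∀ q, π' q = π (σ q)) ∧ ∀ q l, p' q l = p (σ q) (σ l) := by
  classical
  have hπpos : ∀ q, 0 < π q := fun q => (hπ q).1
  have hπ'pos : ∀ q, 0 < π' q := fun q => (hπ' q).1
  have hκpos : 0 < κ := by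
    have h6 : 6 ≤ Q * (Q + 1) := by nlinarith
    omega
  obtain ⟨c, hc⟩ := exists_dual (fun e : {e : Fin Q × Fin Q // e.1 ≤ e.2} => p e.1.1 e.1.2) hind
  obtain ⟨c', hc'⟩ := exists_dual (fun e : {e : Fin Q × Fin Q // e.1 ≤ e.2} => p' e.1.1 e.1.2) hind'
  have hpesort : ∀ q l : Fin Q, p (sortPair q l).1.1 (sortPair q l).1.2 = p q l := by
    intro q l
    rcases sortPair_spec q l with h | h
    · rw [h]
    · rw [h]; exact hpsym l q
  have hp'esort : ∀ q l : Fin Q, p' (sortPair q l).1.1 (sortPair q l).1.2 = p' q l := by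
    intro q l
    rcases sortPair_spec q l with h | h
    · rw [h]
    · rw [h]; exact hp'sym l q
  have hdual : ∀ e (q l : Fin Q), (∑ a, c e a * p q l a) = if sortPair q l = e then 1 else 0 := by
    intro e q l
    rw [← hpesort q l]
    exact hc e (sortPair q l)
  have hdual' : ∀ e (q l : Fin Q), (∑ a, c' e a * p' q l a) = if sortPair q l = e then 1 else 0 := by
    intro e q l
    rw [← hp'esort q l]
    exact hc' e (sortPair q l)
  have hψw := psi_eval π p c hπpos hdual
  have hψ'w' := psi_eval π' p' c' hπ'pos hdual'
  have hwt := wfun_total π p hπsum hpsum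
  have hwt' := wfun_total π' p' hπ'sum hp'sum
  have hT := modelT hκpos π π' p p' hπsum hπ'sum hpsum hp'sum heq
  have hBfold : ∀ (d₁ d : Fin Q × Fin Q),
      (∑ a, ∑ b, (psiA π' c' d₁ a * psiB c' d₁ b) * wfun π p d.1 d.2 a b)
        = BM π' c' π p d₁ d := fun _ _ => rfl
  have hAfold : ∀ (d₁ d : Fin Q × Fin Q),
      (∑ a, ∑ b, (psiA π c d₁ a * psiB c d₁ b) * wfun π' p' d.1 d.2 a b)
        = BM π c π' p' d₁ d := fun _ _ => rfl
  have hPpos : ∀ d : Fin Q × Fin Q, 0 < π d.1 * π d.2 :=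
    fun d => mul_pos (hπpos d.1) (hπpos d.2)
  have hP'pos : ∀ d : Fin Q × Fin Q, 0 < π' d.1 * π' d.2 :=
    fun d => mul_pos (hπ'pos d.1) (hπ'pos d.2)
  -- E1
  have E1 : ∀ d₁ d₂ d₃ : Fin Q × Fin Q,
      (π d₃.1 * π d₃.2) * (BM π' c' π p d₁ d₃ * BM π' c' π p d₂ d₃)
        = if d₂ = d₁ then (π' d₂.1 * π' d₂.2) * BM π c π' p' d₃ d₂ else 0 := by
    intro d₁ d₂ d₃
    have t := hT (fun _ => 1) ![psiA π' c' d₁, psiA π' c' d₂, psiA π c d₃]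
      ![psiB c' d₁, psiB c' d₂, psiB c d₃]
    simp only [Fin.prod_univ_three, Matrix.cons_val_zero, Matrix.cons_val_one, Matrix.head_cons,
      Matrix.cons_val_two, Matrix.tail_cons, one_mul, hpsum, hp'sum, hψw, hψ'w', hBfold, hAfold,
      Prod.mk.eta, mul_ite, ite_mul, mul_one, mul_zero, zero_mul,
      Finset.sum_ite_eq', Finset.mem_univ, if_true] at t
    exact t
  -- E2
  have E2 : ∀ d₁ d₂ : Fin Q × Fin Q,
      (∑ d : Fin Q × Fin Q, (π d.1 * π d.2) * (BM π' c' π p d₁ d * BM π' c' π p d₂ d))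
        = if d₂ = d₁ then (π' d₂.1 * π' d₂.2) else 0 := by
    intro d₁ d₂
    have t := hT (fun _ => 1) ![psiA π' c' d₁, psiA π' c' d₂, fun _ => 1]
      ![psiB c' d₁, psiB c' d₂, fun _ => 1]
    simp only [Fin.prod_univ_three, Matrix.cons_val_zero, Matrix.cons_val_one, Matrix.head_cons,
      Matrix.cons_val_two, Matrix.tail_cons, one_mul, hpsum, hp'sum, hψw, hψ'w', hBfold, hAfold,
      hwt, hwt', Prod.mk.eta, mul_ite, ite_mul, mul_one, mul_zero, zero_mul,
      Finset.sum_ite_eq', Finset.mem_univ, if_true] at t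
    exact t
  -- E3
  have E3 : ∀ d₁ d₂ d₃ : Fin Q × Fin Q,
      (if d₂ = d₁ then (π d₂.1 * π d₂.2) * BM π' c' π p d₃ d₂ else 0)
        = (π' d₃.1 * π' d₃.2) * (BM π c π' p' d₁ d₃ * BM π c π' p' d₂ d₃) := by
    intro d₁ d₂ d₃
    have t := hT (fun _ => 1) ![psiA π c d₁, psiA π c d₂, psiA π' c' d₃]
      ![psiB c d₁, psiB c d₂, psiB c' d₃]
    simp only [Fin.prod_univ_three, Matrix.cons_val_zero, Matrix.cons_val_one, Matrix.head_cons,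
      Matrix.cons_val_two, Matrix.tail_cons, one_mul, hpsum, hp'sum, hψw, hψ'w', hBfold, hAfold,
      Prod.mk.eta, mul_ite, ite_mul, mul_one, mul_zero, zero_mul,
      Finset.sum_ite_eq', Finset.mem_univ, if_true] at t
    exact t
  -- E4
  have E4 : ∀ (d₀ : Fin Q × Fin Q) (k : Fin κ),
      (∑ d : Fin Q × Fin Q, (π d.1 * π d.2) *
          (p d.1 d.2 k * (BM π' c' π p d₀ d * BM π' c' π p d₀ d)))
        = (π' d₀.1 * π' d₀.2) * p' d₀.1 d₀.2 k := by
    intro d₀ k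
    have t := hT (fun k' => if k' = k then 1 else 0)
      ![psiA π' c' d₀, psiA π' c' d₀, fun _ => 1]
      ![psiB c' d₀, psiB c' d₀, fun _ => 1]
    simp only [Fin.prod_univ_three, Matrix.cons_val_zero, Matrix.cons_val_one, Matrix.head_cons,
      Matrix.cons_val_two, Matrix.tail_cons, one_mul, sum_delta_mul, hψw, hψ'w', hBfold, hAfold,
      hwt, hwt', Prod.mk.eta, mul_ite, ite_mul, mul_one, mul_zero, zero_mul,
      Finset.sum_ite_eq', Finset.mem_univ, if_true] at t
    exact t
  -- E5
  have E5 : ∀ (d₀ : Fin Q × Fin Q) (a b : Fin κ),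
      (∑ d : Fin Q × Fin Q, (π d.1 * π d.2) *
          (BM π' c' π p d₀ d * BM π' c' π p d₀ d * wfun π p d.1 d.2 a b))
        = (π' d₀.1 * π' d₀.2) * wfun π' p' d₀.1 d₀.2 a b := by
    intro d₀ a b
    have t := hT (fun _ => 1)
      ![psiA π' c' d₀, psiA π' c' d₀, fun a' => if a' = a then 1 else 0]
      ![psiB c' d₀, psiB c' d₀, fun b' => if b' = b then 1 else 0]
    simp only [Fin.prod_univ_three, Matrix.cons_val_zero, Matrix.cons_val_one, Matrix.head_cons,
      Matrix.cons_val_two, Matrix.tail_cons, one_mul, hpsum, hp'sum, sum_delta2_mul,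
      hψw, hψ'w', hBfold, hAfold, Prod.mk.eta, mul_ite, ite_mul, mul_one, mul_zero, zero_mul,
      Finset.sum_ite_eq', Finset.mem_univ, if_true] at t
    exact t
  -- existence of a nonzero column for each row of B
  have hex : ∀ d₀ : Fin Q × Fin Q, ∃ d, BM π' c' π p d₀ d ≠ 0 := by
    intro d₀
    by_contra hcon
    push_neg at hcon
    have h := E2 d₀ d₀
    rw [if_pos rfl] at h
    rw [Finset.sum_eq_zero (fun d _ => by rw [hcon d]; ring)] at h
    exact (hP'pos d₀).ne' h.symm
  choose χ hχ using hex
  have hAne : ∀ d₀ d, BM π' c' π p d₀ d ≠ 0 → BM π c π' p' d d₀ ≠ 0 := by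
    intro d₀ d hB
    have h := E1 d₀ d₀ d
    rw [if_pos rfl] at h
    intro hA
    rw [hA, mul_zero] at h
    exact (mul_ne_zero (hPpos d).ne' (mul_ne_zero hB hB)) h
  have huniq : ∀ d₀ d, BM π' c' π p d₀ d ≠ 0 → d = χ d₀ := by
    intro d₀ d hB
    by_contra hne
    have h := E3 d (χ d₀) d₀
    rw [if_neg (fun h' => hne h'.symm)] at h
    exact (mul_ne_zero (hP'pos d₀).ne'
      (mul_ne_zero (hAne d₀ d hB) (hAne d₀ (χ d₀) (hχ d₀)))) h.symm
  have hB0 : ∀ d₀ d, d ≠ χ d₀ → BM π' c' π p d₀ d = 0 := by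
    intro d₀ d hd
    by_contra hcon
    exact hd (huniq d₀ d hcon)
  -- collapse E5
  have hcol : ∀ (d₀ : Fin Q × Fin Q) (a b : Fin κ),
      (π (χ d₀).1 * π (χ d₀).2) * (BM π' c' π p d₀ (χ d₀) * BM π' c' π p d₀ (χ d₀) *
        wfun π p (χ d₀).1 (χ d₀).2 a b)
      = (π' d₀.1 * π' d₀.2) * wfun π' p' d₀.1 d₀.2 a b := by
    intro d₀ a b
    have h := E5 d₀ a b
    rw [Finset.sum_eq_single (χ d₀) (fun d _ hd => by rw [hB0 d₀ d hd]; ring)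
      (fun hd => absurd (Finset.mem_univ _) hd)] at h
    exact h
  have hfac : ∀ d₀ : Fin Q × Fin Q,
      (π (χ d₀).1 * π (χ d₀).2) * (BM π' c' π p d₀ (χ d₀) * BM π' c' π p d₀ (χ d₀))
        = π' d₀.1 * π' d₀.2 := by
    intro d₀
    have h1 : ∑ a : Fin κ, ∑ b : Fin κ,
        (π (χ d₀).1 * π (χ d₀).2) * (BM π' c' π p d₀ (χ d₀) * BM π' c' π p d₀ (χ d₀) *
          wfun π p (χ d₀).1 (χ d₀).2 a b)
        = ∑ a : Fin κ, ∑ b : Fin κ, (π' d₀.1 * π' d₀.2) * wfun π' p' d₀.1 d₀.2 a b :=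
      Finset.sum_congr rfl fun a _ => Finset.sum_congr rfl fun b _ => hcol d₀ a b
    have h2 : ∀ a b : Fin κ,
        (π (χ d₀).1 * π (χ d₀).2) * (BM π' c' π p d₀ (χ d₀) * BM π' c' π p d₀ (χ d₀) *
          wfun π p (χ d₀).1 (χ d₀).2 a b)
        = ((π (χ d₀).1 * π (χ d₀).2) * (BM π' c' π p d₀ (χ d₀) * BM π' c' π p d₀ (χ d₀))) *
          wfun π p (χ d₀).1 (χ d₀).2 a b := fun a b => by ring
    rw [Finset.sum_congr rfl fun a _ => Finset.sum_congr rfl fun b _ => h2 a b] at h1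
    rw [pull_const, pull_const, hwt, hwt', mul_one, mul_one] at h1
    exact h1
  have hw' : ∀ (d₀ : Fin Q × Fin Q) (a b : Fin κ),
      wfun π' p' d₀.1 d₀.2 a b = wfun π p (χ d₀).1 (χ d₀).2 a b := by
    intro d₀ a b
    have h := hcol d₀ a b
    have h2 : (π (χ d₀).1 * π (χ d₀).2) * (BM π' c' π p d₀ (χ d₀) * BM π' c' π p d₀ (χ d₀) *
          wfun π p (χ d₀).1 (χ d₀).2 a b)
        = ((π (χ d₀).1 * π (χ d₀).2) * (BM π' c' π p d₀ (χ d₀) * BM π' c' π p d₀ (χ d₀))) *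
          wfun π p (χ d₀).1 (χ d₀).2 a b := by ring
    rw [h2, hfac d₀] at h
    exact (mul_left_cancel₀ (hP'pos d₀).ne' h).symm
  have hB1 : ∀ d₀ : Fin Q × Fin Q, BM π' c' π p d₀ (χ d₀) = 1 := by
    intro d₀
    have h : BM π' c' π p d₀ (χ d₀)
        = ∑ a, ∑ b, (psiA π' c' d₀ a * psiB c' d₀ b) * wfun π' p' d₀.1 d₀.2 a b := by
      rw [← hBfold]
      exact Finset.sum_congr rfl fun a _ => Finset.sum_congr rfl fun b _ => by
        rw [← hw' d₀ a b]
    rw [h, hψ'w' d₀ d₀.1 d₀.2, if_pos Prod.mk.eta]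
  have hPP : ∀ d₀ : Fin Q × Fin Q, π' d₀.1 * π' d₀.2 = π (χ d₀).1 * π (χ d₀).2 := by
    intro d₀
    have h := hfac d₀
    rw [hB1 d₀, mul_one, mul_one] at h
    exact h.symm
  have hpp : ∀ (d₀ : Fin Q × Fin Q) (k : Fin κ),
      p' d₀.1 d₀.2 k = p (χ d₀).1 (χ d₀).2 k := by
    intro d₀ k
    have h := E4 d₀ k
    rw [Finset.sum_eq_single (χ d₀) (fun d _ hd => by rw [hB0 d₀ d hd]; ring)
      (fun hd => absurd (Finset.mem_univ _) hd)] at h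
    rw [hB1 d₀, mul_one, hPP d₀] at h
    have h3 := mul_left_cancel₀ (hPpos (χ d₀)).ne' h
    rw [mul_one] at h3
    exact h3.symm
  have hχinj : Function.Injective χ := by
    intro a b hab
    by_contra hne
    have h := E1 a b (χ a)
    rw [if_neg (fun h' => hne h'.symm), hB1 a] at h
    have hBb : BM π' c' π p b (χ a) = 1 := by rw [hab]; exact hB1 b
    rw [hBb, mul_one, mul_one] at h
    exact (hPpos (χ a)).ne' h
  have hdiagg : ∀ q : Fin Q, (χ (q, q)).2 = (χ (q, q)).1 := by
    intro q
    have hsymm : ∀ a b, wfun π p (χ (q,q)).1 (χ (q,q)).2 a b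
        = wfun π p (χ (q,q)).1 (χ (q,q)).2 b a := by
      intro a b
      rw [← hw' (q,q) a b, ← hw' (q,q) b a]
      unfold wfun
      exact Finset.sum_congr rfl fun m _ => by ring
    have hswap : ∀ a b, wfun π p (χ (q,q)).2 (χ (q,q)).1 a b
        = wfun π p (χ (q,q)).1 (χ (q,q)).2 a b := by
      intro a b
      calc wfun π p (χ (q,q)).2 (χ (q,q)).1 a b
          = wfun π p (χ (q,q)).1 (χ (q,q)).2 b a := by
            unfold wfun; exact Finset.sum_congr rfl fun m _ => by ring
        _ = wfun π p (χ (q,q)).1 (χ (q,q)).2 a b := (hsymm a b).symm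
    have h1 := hψw (χ (q,q)) (χ (q,q)).2 (χ (q,q)).1
    rw [Finset.sum_congr rfl (fun a _ => Finset.sum_congr rfl fun b _ => by
      rw [hswap a b])] at h1
    have h2 := hψw (χ (q,q)) (χ (q,q)).1 (χ (q,q)).2
    rw [if_pos Prod.mk.eta] at h2
    rw [h2] at h1
    by_contra hne
    rw [if_neg (fun hcon => hne (congrArg Prod.fst hcon))] at h1
    exact one_ne_zero h1
  set σf : Fin Q → Fin Q := fun q => (χ (q, q)).1 with hσf
  have hχqq : ∀ q : Fin Q, χ (q, q) = (σf q, σf q) := by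
    intro q
    have := hdiagg q
    rw [Prod.ext_iff]
    exact ⟨rfl, this⟩
  have hσinj : Function.Injective σf := by
    intro a b hab
    have h : χ (a, a) = χ (b, b) := by rw [hχqq a, hχqq b, hab]
    have h2 := hχinj h
    exact congrArg Prod.fst h2
  have hπ'σ : ∀ q, π' q = π (σf q) := by
    intro q
    have h : π' q * π' q = π (σf q) * π (σf q) := by
      have h0 := hPP (q, q)
      rw [hχqq q] at h0
      exact h0
    have hfactor : (π' q - π (σf q)) * (π' q + π (σf q)) = 0 := by linear_combination h
    rcases mul_eq_zero.mp hfactor with h1 | h1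
    · linarith
    · exfalso
      have := hπ'pos q
      have := hπpos (σf q)
      linarith
  have hcont : ∀ q m : Fin Q, (χ (q, m)).1 = σf q ∨ (χ (q, m)).2 = σf q := by
    intro q m
    by_contra hcon
    push_neg at hcon
    obtain ⟨hc1, hc2⟩ := hcon
    have hid : ∀ a b, wfun π' p' q q a b = wfun π p (σf q) (σf q) a b := by
      intro a b
      have h := hw' (q, q) a b
      rw [hχqq q] at h
      exact h
    set e := sortPair (χ (q, m)).1 (χ (q, m)).2 with he
    have hY1 : ∑ a, ∑ b, (c e a * c e b) * wfun π' p' q q a b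
        = ∑ m', π' m' * ((∑ a, c e a * p' q m' a) * (∑ b, c e b * p' q m' b)) :=
      contract_w π' p' q q (c e) (c e)
    have hY2 : ∑ a, ∑ b, (c e a * c e b) * wfun π' p' q q a b
        = ∑ m', π m' * ((∑ a, c e a * p (σf q) m' a) * (∑ b, c e b * p (σf q) m' b)) := by
      rw [Finset.sum_congr rfl fun a _ => Finset.sum_congr rfl fun b _ => by
        rw [hid a b]]
      exact contract_w π p (σf q) (σf q) (c e) (c e)
    have hz : ∀ m' : Fin Q, (∑ a, c e a * p (σf q) m' a) = 0 := by
      intro m'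
      rw [hdual e (σf q) m']
      rw [if_neg ?_]
      intro hcon2
      have hmem : e.1.1 = σf q ∨ e.1.2 = σf q := by
        rcases sortPair_spec (σf q) m' with h' | h'
        · left; rw [← hcon2, h']
        · right; rw [← hcon2, h']
      have hmem1 : e.1.1 = (χ (q,m)).1 ∨ e.1.1 = (χ (q,m)).2 := by
        rw [he]; exact sortPair_fst_mem _ _
      have hmem2 : e.1.2 = (χ (q,m)).1 ∨ e.1.2 = (χ (q,m)).2 := by
        rw [he]; exact sortPair_snd_mem _ _
      rcases hmem with h | h
      · rcases hmem1 with h' | h'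
        · exact hc1 (by rw [← h', h])
        · exact hc2 (by rw [← h', h])
      · rcases hmem2 with h' | h'
        · exact hc1 (by rw [← h', h])
        · exact hc2 (by rw [← h', h])
    have hYzero : ∑ m', π' m' * ((∑ a, c e a * p' q m' a) * (∑ b, c e b * p' q m' b)) = 0 := by
      rw [← hY1, hY2]
      exact Finset.sum_eq_zero fun m' _ => by rw [hz m']; ring
    have hterm : ∀ m' : Fin Q,
        0 ≤ π' m' * ((∑ a, c e a * p' q m' a) * (∑ b, c e b * p' q m' b)) := by
      intro m'
      exact mul_nonneg (le_of_lt (hπ'pos m')) (mul_self_nonneg _)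
    have hS : (∑ a, c e a * p' q m a) = 1 := by
      rw [Finset.sum_congr rfl fun a _ => by
        rw [show p' q m a = p (χ (q,m)).1 (χ (q,m)).2 a from hpp (q,m) a]]
      rw [hdual e (χ (q,m)).1 (χ (q,m)).2, he, if_pos rfl]
    have hm : π' m * ((∑ a, c e a * p' q m a) * (∑ b, c e b * p' q m b)) = π' m := by
      rw [hS]; ring
    have hge : π' m ≤ ∑ m', π' m' * ((∑ a, c e a * p' q m' a) * (∑ b, c e b * p' q m' b)) := by
      rw [← hm]
      exact Finset.single_le_sum (fun i _ => hterm i) (Finset.mem_univ m)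
    rw [hYzero] at hge
    linarith [hπ'pos m]
  have hform : ∀ q m : Fin Q, ∃ y, ∀ k, p' q m k = p (σf q) y k := by
    intro q m
    rcases hcont q m with h | h
    · refine ⟨(χ (q, m)).2, fun k => ?_⟩
      rw [hpp (q, m) k, h]
    · refine ⟨(χ (q, m)).1, fun k => ?_⟩
      rw [hpp (q, m) k, h, hpsym (χ (q,m)).1 (σf q)]
  have hmain : ∀ q m : Fin Q, ∀ k, p' q m k = p (σf q) (σf m) k := by
    intro q m
    by_cases hqm : q = m
    · subst hqm
      intro k
      rw [hpp (q, q) k, hχqq q]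
    · obtain ⟨y, hy⟩ := hform q m
      obtain ⟨y', hy'⟩ := hform m q
      have hpe : p (σf q) y = p (σf m) y' := by
        funext k
        rw [← hy k, ← hy' k]
        exact congrFun (hp'sym q m) k
      have hsp : sortPair (σf q) y = sortPair (σf m) y' := by
        apply hind.injective
        show p (sortPair (σf q) y).1.1 (sortPair (σf q) y).1.2
          = p (sortPair (σf m) y').1.1 (sortPair (σf m) y').1.2
        rw [hpesort (σf q) y, hpesort (σf m) y']
        exact hpe
      rcases sortPair_cases hsp with ⟨h1, h2⟩ | ⟨h1, h2⟩
      · exact absurd (hσinj h1) hqm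
      · intro k
        rw [hy k, h2]
  refine ⟨Equiv.ofBijective σf ((Finite.injective_iff_bijective).mp hσinj), ?_, ?_⟩
  · intro q
    exact hπ'σ q
  · intro q l
    funext k
    exact hmain q l k
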